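/- Let K, H be finite-dimensional complex Hilbert spaces and φ : B(K) → B(H) a positive linear map with φ(X) = B₁ X B₂ for all X ∈ B(K), where B₁ ∈ B(K,H), B₂ ∈ B(H,K), and B₁ ≠ 0. Then there exists B ∈ B(K,H) such that φ(X) = B X B* for all X ∈ B(K). -/

import Mathlib

open Matrix ComplexOrder

/-- A linear map between matrix algebras is positive if it maps positive
semidefinite matrices to positive semidefinite matrices. -/
def PosMap {n m : ℕ} (φ : Matrix (Fin n) (Fin n) ℂ →ₗ[ℂ] Matrix (Fin m) (Fin m) ℂ) : Prop :=
  ∀ X : Matrix (Fin n) (Fin n) ℂ, X.PosSemidef → (φ X).PosSemidef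

/-- `P` is a one-dimensional orthogonal projection. -/
def IsProj1 {n : ℕ} (P : Matrix (Fin n) (Fin n) ℂ) : Prop :=
  P.IsHermitian ∧ P * P = P ∧ P.rank = 1

/-- The ampliation `id ⊗ φ` applied blockwise to a `k × k` block matrix. -/
def amp {n m : ℕ} (k : ℕ) (φ : Matrix (Fin n) (Fin n) ℂ →ₗ[ℂ] Matrix (Fin m) (Fin m) ℂ)
    (M : Matrix (Fin k × Fin n) (Fin k × Fin n) ℂ) : Matrix (Fin k × Fin m) (Fin k × Fin m) ℂ :=
  Matrix.of fun p q => φ (Matrix.of fun a b => M (p.1, a) (q.1, b)) p.2 q.2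

/-- Complete positivity: all ampliations preserve positive semidefiniteness. -/
def CompletelyPositive {n m : ℕ}
    (φ : Matrix (Fin n) (Fin n) ℂ →ₗ[ℂ] Matrix (Fin m) (Fin m) ℂ) : Prop :=
  ∀ (k : ℕ) (M : Matrix (Fin k × Fin n) (Fin k × Fin n) ℂ),
    M.PosSemidef → (amp k φ M).PosSemidef

/-- Complete copositivity: `X ↦ φ(Xᵀ)` is completely positive. -/
def CompletelyCopositive {n m : ℕ}
    (φ : Matrix (Fin n) (Fin n) ℂ →ₗ[ℂ] Matrix (Fin m) (Fin m) ℂ) : Prop :=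
  ∀ (k : ℕ) (M : Matrix (Fin k × Fin n) (Fin k × Fin n) ℂ), M.PosSemidef →
    (Matrix.of fun p q : Fin k × Fin m =>
      φ (Matrix.of fun a b => M (p.1, b) (q.1, a)) p.2 q.2).PosSemidef

/-- `φ` is extremal in the cone of positive maps. -/
def IsExtremalPos {n m : ℕ}
    (φ : Matrix (Fin n) (Fin n) ℂ →ₗ[ℂ] Matrix (Fin m) (Fin m) ℂ) : Prop :=
  PosMap φ ∧ ∀ ψ, PosMap ψ → PosMap (φ - ψ) → ∃ l : ℝ, 0 ≤ l ∧ ψ = (l : ℂ) • φ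

/-- `φ` is decomposable: a sum of a completely positive and a completely
copositive map. -/
def Decomposable {n m : ℕ}
    (φ : Matrix (Fin n) (Fin n) ℂ →ₗ[ℂ] Matrix (Fin m) (Fin m) ℂ) : Prop :=
  ∃ φ₁ φ₂, CompletelyPositive φ₁ ∧ CompletelyCopositive φ₂ ∧ φ = φ₁ + φ₂


private lemma entry_lemma {n m : ℕ} (B₁ : Matrix (Fin m) (Fin n) ℂ) (B₂ : Matrix (Fin n) (Fin m) ℂ)
    (v : Fin n → ℂ) (i j : Fin m) :
    (B₁ * (Matrix.of fun a b => v a * (starRingEnd ℂ) (v b)) * B₂) i j =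
      (∑ k, B₁ i k * v k) * (∑ l, (starRingEnd ℂ) (v l) * B₂ l j) := by
  simp only [Matrix.mul_apply, Matrix.of_apply, Finset.sum_mul, Finset.mul_sum]
  apply Finset.sum_congr rfl; intros; apply Finset.sum_congr rfl; intros; ring

private lemma rank1_psd {n : ℕ} (v : Fin n → ℂ) :
    (Matrix.of fun i j => v i * (starRingEnd ℂ) (v j)).PosSemidef := by
  have := Matrix.posSemidef_conjTranspose_mul_self
    (Matrix.of (fun (_ : Fin 1) j => (starRingEnd ℂ) (v j)))
  convert this using 2
  ext i j
  simp [Matrix.mul_apply, Matrix.conjTranspose_apply, mul_comm]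

theorem stmt7 {n m : ℕ}
    (φ : Matrix (Fin n) (Fin n) ℂ →ₗ[ℂ] Matrix (Fin m) (Fin m) ℂ)
    (hpos : PosMap φ)
    (B₁ : Matrix (Fin m) (Fin n) ℂ) (B₂ : Matrix (Fin n) (Fin m) ℂ)
    (hB₁ : B₁ ≠ 0)
    (hφ : ∀ X, φ X = B₁ * X * B₂) :
    ∃ B : Matrix (Fin m) (Fin n) ℂ, ∀ X, φ X = B * X * Bᴴ := by
  classical
  have key : ∀ (v : Fin n → ℂ) (i j : Fin m),
      (∑ k, B₁ i k * v k) * (∑ l, (starRingEnd ℂ) (v l) * B₂ l j)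
        = (starRingEnd ℂ) (∑ k, B₁ j k * v k) *
            (starRingEnd ℂ) (∑ l, (starRingEnd ℂ) (v l) * B₂ l i) := by
    intro v i j
    have hH := (hpos _ (rank1_psd v)).1
    rw [hφ] at hH
    have e := hH.apply i j
    rw [entry_lemma, entry_lemma] at e
    rw [← e]
    simp [star_mul']
  have key2 : ∀ (i j : Fin m) (k l : Fin n),
      B₁ i k * B₂ l j = (starRingEnd ℂ) (B₁ j l) * (starRingEnd ℂ) (B₂ k i) := by
    intro i j k l
    rcases eq_or_ne k l with rfl | hkl
    · have := key (Pi.single k 1) i j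
      simpa [Pi.single_apply, mul_ite, ite_mul, apply_ite (starRingEnd ℂ),
        Finset.sum_ite_eq', mul_comm] using this
    · have dk := key (Pi.single k 1) i j
      have dl := key (Pi.single l 1) i j
      have e1 := key (Pi.single k 1 + Pi.single l 1) i j
      have ei := key (Pi.single k 1 + Pi.single l Complex.I) i j
      simp only [Pi.add_apply, mul_add, add_mul, Finset.sum_add_distrib, map_add, map_neg,
        Pi.single_apply, mul_ite, ite_mul, apply_ite (starRingEnd ℂ), _root_.map_one, map_zero,
        mul_one, mul_zero, one_mul, zero_mul, Finset.sum_ite_eq', Finset.mem_univ, if_true,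
        Complex.conj_I, _root_.map_mul] at dk dl e1 ei
      have h1 : B₁ i k * B₂ l j + B₁ i l * B₂ k j =
          (starRingEnd ℂ) (B₁ j l) * (starRingEnd ℂ) (B₂ k i) +
            (starRingEnd ℂ) (B₁ j k) * (starRingEnd ℂ) (B₂ l i) := by
        linear_combination e1 - dk - dl
      have h2 : B₁ i l * B₂ k j - B₁ i k * B₂ l j =
          (starRingEnd ℂ) (B₁ j k) * (starRingEnd ℂ) (B₂ l i) -
            (starRingEnd ℂ) (B₁ j l) * (starRingEnd ℂ) (B₂ k i) := by
        apply mul_left_cancel₀ Complex.I_ne_zero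
        linear_combination ei - dk + (Complex.I * Complex.I) * dl
      linear_combination (1/2 : ℂ) * h1 - (1/2 : ℂ) * h2
  -- find a nonzero entry of B₁
  obtain ⟨i₀, k₀, hne⟩ : ∃ i k, B₁ i k ≠ 0 := by
    by_contra h
    push_neg at h
    exact hB₁ (by ext i k; simpa using h i k)
  set μ : ℂ := (starRingEnd ℂ) (B₂ k₀ i₀) / B₁ i₀ k₀ with hμdef
  have hB₂ : B₂ = μ • B₁ᴴ := by
    ext l j
    have h := key2 i₀ j k₀ l
    simp only [Matrix.smul_apply, Matrix.conjTranspose_apply, hμdef, smul_eq_mul]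
    field_simp
    simp only [Complex.star_def]
    linear_combination h
  -- positivity forces μ real nonnegative
  have hdiag : 0 ≤ μ * ∑ k, (B₁ i₀ k * (starRingEnd ℂ) (B₁ i₀ k)) := by
    have hp := hpos 1 Matrix.PosSemidef.one
    rw [hφ, Matrix.mul_one] at hp
    have h0 := hp.dotProduct_mulVec_nonneg (Pi.single i₀ 1)
    have : star (Pi.single i₀ (1:ℂ)) ⬝ᵥ (B₁ * B₂) *ᵥ Pi.single i₀ 1 = (B₁ * B₂) i₀ i₀ := by
      simp [Matrix.mulVec, dotProduct, Pi.single_apply, apply_ite (starRingEnd ℂ),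
        mul_ite, ite_mul, Finset.sum_ite_eq', Finset.mem_univ]
    rw [this] at h0
    have hentry : (B₁ * B₂) i₀ i₀ = μ * ∑ k, (B₁ i₀ k * (starRingEnd ℂ) (B₁ i₀ k)) := by
      rw [hB₂]
      simp only [Matrix.mul_apply, Matrix.smul_apply, Matrix.conjTranspose_apply, Complex.star_def, smul_eq_mul,
        Finset.mul_sum]
      apply Finset.sum_congr rfl; intros; ring
    rwa [hentry] at h0
  have hs : ∀ k, (B₁ i₀ k * (starRingEnd ℂ) (B₁ i₀ k)) = ((Complex.normSq (B₁ i₀ k) : ℝ) : ℂ) := by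
    intro k
    rw [mul_comm, Complex.normSq_eq_conj_mul_self]
  have hsum : (∑ k, (B₁ i₀ k * (starRingEnd ℂ) (B₁ i₀ k))) =
      ((∑ k, Complex.normSq (B₁ i₀ k) : ℝ) : ℂ) := by
    push_cast
    exact Finset.sum_congr rfl fun k _ => hs k
  set s : ℝ := ∑ k, Complex.normSq (B₁ i₀ k) with hsdef
  have hspos : 0 < s := by
    apply Finset.sum_pos' (fun k _ => Complex.normSq_nonneg _)
    exact ⟨k₀, Finset.mem_univ _, Complex.normSq_pos.mpr hne⟩
  have hμre : 0 ≤ μ.re ∧ μ.im = 0 := by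
    rw [hsum] at hdiag
    rw [Complex.le_def] at hdiag
    simp [Complex.mul_re, Complex.mul_im] at hdiag
    constructor
    · nlinarith [hdiag.1, hspos]
    · rcases hdiag.2 with h | h
      · exact h
      · linarith
  refine ⟨(Real.sqrt μ.re : ℂ) • B₁, fun X => ?_⟩
  rw [hφ, hB₂]
  have hμ : μ = ((μ.re : ℝ) : ℂ) := by
    rw [Complex.ext_iff]; simp [hμre.2]
  rw [Matrix.conjTranspose_smul]
  rw [Matrix.mul_smul, Matrix.smul_mul, Matrix.mul_smul, Matrix.smul_mul, smul_smul]
  congr 1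
  rw [Complex.star_def, Complex.conj_ofReal, hμ]
  norm_cast
  rw [Real.mul_self_sqrt hμre.1]
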